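/- arXiv:2407.13114 — 2 statements merged into one kernel-verified Lean document; each statement's English description precedes it below -/
import Mathlib

section
/- Let B = (b₁,…,b_k) be a digit block of length k ≥ 1 and let ℓ ≥ k. If b₁ ≠ 0, then occ_no(B, s_ℓ) = 10^{ℓ−k} + (ℓ−k)·9·10^{ℓ−k−1}; if b₁ = 0, then occ_no(B, s_ℓ) = (ℓ−k)·9·10^{ℓ−k−1}. (When ℓ = k the term (ℓ−k)·9·10^{ℓ−k−1} is 0.) -/
open scoped Classical

/-- The `i`-th decimal digit (for `i ≥ 1`) of a real number `α`, using the floor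
convention, which for numbers admitting two decimal expansions selects the
expansion ending in a tail of `0`s. -/
noncomputable def digit (α : ℝ) (i : ℕ) : ℕ := (⌊α * 10 ^ i⌋ % 10).toNat

/-- Number of occurrences of the digit block `B` (of length `k`) as consecutive
digits among the first `N` decimal digits of `α`:
`occ α B N = #{i : 1 ≤ i ≤ N - k + 1 ∧ (α_i, …, α_{i+k-1}) = B}`. -/
noncomputable def occ {k : ℕ} (α : ℝ) (B : Fin k → Fin 10) (N : ℕ) : ℕ :=
  ((Finset.Icc 1 N).filter fun i =>
    i + k ≤ N + 1 ∧ ∀ j : Fin k, digit α (i + (j : ℕ)) = (B j : ℕ)).card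

/-- Discrepancy of the first `N` terms of a sequence `(x_n)_{n ≥ 1}` of points of `[0,1)`:
the supremum over `0 ≤ a < b < 1` of `|#{n ≤ N : x n ∈ [a,b)}/N - (b - a)|`. -/
noncomputable def discSeq (x : ℕ → ℝ) (N : ℕ) : ℝ :=
  sSup {d : ℝ | ∃ a b : ℝ, 0 ≤ a ∧ a < b ∧ b < 1 ∧
    d = |(((Finset.Icc 1 N).filter fun n => x n ∈ Set.Ico a b).card : ℝ) / N - (b - a)|}

/-- Discrepancy of a real number for base 10: the discrepancy of the sequence
`(10^(n-1) α mod 1)_{n ≥ 1}`. -/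
noncomputable def D (α : ℝ) (N : ℕ) : ℝ :=
  discSeq (fun n => Int.fract (10 ^ (n - 1) * α)) N

/-- `T v` is the total number of digits in the concatenation of the decimal
representations of `1, 2, …, v`. -/
def T (v : ℕ) : ℕ := ∑ j ∈ Finset.Icc 1 v, (Nat.digits 10 j).length

/-- The Champernowne constant `c = 0.123456789101112…`, the concatenation of the
positive integers in base 10: the term `m` ends at decimal position `T m`. -/
noncomputable def champ : ℝ := ∑' m : ℕ, (m : ℝ) / 10 ^ T m

/-- `vOf N` is the least `v` with `T v ≥ N` (the term of the concatenation
containing the `N`-th digit). -/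
noncomputable def vOf (N : ℕ) : ℕ := sInf {v | N ≤ T v}

/-- `nOf N` is the number of decimal digits of `vOf N`. -/
noncomputable def nOf (N : ℕ) : ℕ := (Nat.digits 10 (vOf N)).length

/-- Number of non-overlapping occurrences of the block `B` (length `k`) in the string
`s_ℓ` (the concatenation of all `ℓ`-digit integers in increasing order): the number of
pairs `(y, j)` with `10^(ℓ-1) ≤ y < 10^ℓ`, `1 ≤ j ≤ ℓ - k + 1`, such that the digits of
`y` in positions `j, …, j + k - 1` (counted from the left) equal `B`. -/
def occNoSeg {k : ℕ} (B : Fin k → Fin 10) (ℓ : ℕ) : ℕ :=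
  ((Finset.Ico (10 ^ (ℓ - 1)) (10 ^ ℓ) ×ˢ Finset.Icc 1 (ℓ - k + 1)).filter fun p =>
    ∀ i : Fin k, p.1 / 10 ^ (ℓ - (p.2 + (i : ℕ))) % 10 = (B i : ℕ)).card

/-- Number of occurrences of the block `B` (length `k ≤ ℓ`) in the string `s_ℓ` that
straddle the boundary between two consecutive `ℓ`-digit terms `y` and `y + 1`:
the number of pairs `(y, j)` with `10^(ℓ-1) ≤ y < 10^ℓ - 1` and `1 ≤ j ≤ k - 1` such
that the last `j` digits of `y` are `(b₁, …, b_j)` and the first `k - j` digits of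
`y + 1` are `(b_{j+1}, …, b_k)`. -/
def occOSeg {k : ℕ} (B : Fin k → Fin 10) (ℓ : ℕ) : ℕ :=
  ((Finset.Ico (10 ^ (ℓ - 1)) (10 ^ ℓ - 1) ×ˢ Finset.Ico 1 k).filter fun p =>
    (∀ i : Fin k, (i : ℕ) < p.2 → p.1 / 10 ^ (p.2 - 1 - (i : ℕ)) % 10 = (B i : ℕ)) ∧
    (∀ i : Fin k, p.2 ≤ (i : ℕ) →
      (p.1 + 1) / 10 ^ (ℓ - 1 - ((i : ℕ) - p.2)) % 10 = (B i : ℕ))).card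

lemma decomp (y d q : ℕ) :
    y = d * q * (y / (d * q)) + d * (y / d % q) + y % d := by
  have h2 := Nat.div_add_mod (y / d) q
  have h3 : y / d / q = y / (d * q) := Nat.div_div_eq_div_mul y d q
  calc y = d * (y / d) + y % d := (Nat.div_add_mod y d).symm
  _ = d * (q * (y / (d*q)) + y / d % q) + y % d := by rw [h3] at h2; rw [h2]
  _ = d * q * (y / (d * q)) + d * (y / d % q) + y % d := by ring

lemma count_filter (a b d q m : ℕ) (hd : 0 < d) (hq : 0 < q) (hm : m < q) :
    ((Finset.Ico (a * (d * q)) (b * (d * q))).filter fun y => y / d % q = m).card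
      = (b - a) * d := by
  have hdq : 0 < d * q := Nat.mul_pos hd hq
  have hmd : ∀ l, l < d → m * d + l < d * q := by
    intro l hl
    have e1 : (m + 1) * d = m * d + d := Nat.succ_mul m d
    have e2 : (m + 1) * d ≤ q * d := Nat.mul_le_mul_right _ hm
    have e3 : q * d = d * q := Nat.mul_comm q d
    omega
  rw [show (b - a) * d = (Finset.Ico a b ×ˢ Finset.range d).card by
    rw [Finset.card_product, Nat.card_Ico, Finset.card_range]]
  apply Finset.card_bij' (fun y _ => (y / (d * q), y % d))
    (fun p _ => p.1 * (d * q) + m * d + p.2)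
  · intro y hy
    simp only [Finset.mem_filter, Finset.mem_Ico] at hy
    obtain ⟨⟨h1, h2⟩, h3⟩ := hy
    simp only [Finset.mem_product, Finset.mem_Ico, Finset.mem_range]
    exact ⟨⟨(Nat.le_div_iff_mul_le hdq).2 h1, (Nat.div_lt_iff_lt_mul hdq).2 h2⟩,
      Nat.mod_lt _ hd⟩
  · rintro ⟨h, l⟩ hp
    simp only [Finset.mem_product, Finset.mem_Ico, Finset.mem_range] at hp
    obtain ⟨⟨h1, h2⟩, h3⟩ := hp
    have key : h * (d * q) + m * d + l = d * (h * q + m) + l := by ring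
    simp only [Finset.mem_filter, Finset.mem_Ico]
    refine ⟨⟨?_, ?_⟩, ?_⟩
    · calc a * (d * q) ≤ h * (d * q) := Nat.mul_le_mul_right _ h1
      _ ≤ h * (d * q) + m * d + l := by omega
    · have := hmd l h3
      calc h * (d * q) + m * d + l < (h + 1) * (d * q) := by
            rw [Nat.add_mul, Nat.one_mul]; omega
      _ ≤ b * (d * q) := Nat.mul_le_mul_right _ h2
    · rw [key, Nat.mul_add_div hd, Nat.div_eq_of_lt h3, Nat.add_zero,
        Nat.mul_comm h q, Nat.mul_add_mod, Nat.mod_eq_of_lt hm]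
  · intro y hy
    simp only [Finset.mem_filter, Finset.mem_Ico] at hy
    have h := decomp y d q
    rw [hy.2] at h
    show y / (d * q) * (d * q) + m * d + y % d = y
    have e1 : y / (d * q) * (d * q) = d * q * (y / (d * q)) := Nat.mul_comm _ _
    have e2 : m * d = d * m := Nat.mul_comm m d
    omega
  · rintro ⟨h, l⟩ hp
    simp only [Finset.mem_product, Finset.mem_Ico, Finset.mem_range] at hp
    obtain ⟨⟨h1, h2⟩, h3⟩ := hp
    have key : h * (d * q) + m * d + l = (d * q) * h + (m * d + l) := by ring
    have hdiv : (h * (d * q) + m * d + l) / (d * q) = h := by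
      rw [key, Nat.mul_add_div hdq, Nat.div_eq_of_lt (hmd l h3), Nat.add_zero]
    have hmod : (h * (d * q) + m * d + l) % d = l := by
      have key2 : h * (d * q) + m * d + l = d * (h * q + m) + l := by ring
      rw [key2, Nat.mul_add_mod, Nat.mod_eq_of_lt h3]
    simp [hdiv, hmod]

lemma sum_succ_expand (c : ℕ → ℕ) (k : ℕ) :
    ∑ i ∈ Finset.range (k + 1), c i * 10 ^ (k - i)
      = 10 * ∑ i ∈ Finset.range k, c i * 10 ^ (k - 1 - i) + c k := by
  rw [Finset.sum_range_succ, Nat.sub_self, pow_zero, Nat.mul_one, Finset.mul_sum]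
  congr 1
  apply Finset.sum_congr rfl
  intro i hi
  rw [Finset.mem_range] at hi
  have : k - i = (k - 1 - i) + 1 := by omega
  rw [this, pow_succ]
  ring

lemma digit_block_iff (c : ℕ → ℕ) (hc : ∀ i, c i < 10) :
    ∀ k z, ((∀ i < k, z / 10 ^ (k - 1 - i) % 10 = c i) ↔
      z % 10 ^ k = ∑ i ∈ Finset.range k, c i * 10 ^ (k - 1 - i)) := by
  intro k
  induction k with
  | zero => intro z; simp [Nat.mod_one]
  | succ k ih =>
    intro z
    have hz : z % 10 ^ (k + 1) = 10 * (z / 10 % 10 ^ k) + z % 10 := by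
      rw [pow_succ', Nat.mod_mul]; omega
    have hsum : ∑ i ∈ Finset.range (k + 1), c i * 10 ^ (k + 1 - 1 - i)
        = 10 * ∑ i ∈ Finset.range k, c i * 10 ^ (k - 1 - i) + c k := by
      simpa using sum_succ_expand c k
    rw [hsum, hz]
    have hL : (∀ i < k + 1, z / 10 ^ (k + 1 - 1 - i) % 10 = c i) ↔
        ((∀ i < k, (z / 10) / 10 ^ (k - 1 - i) % 10 = c i) ∧ z % 10 = c k) := by
      constructor
      · intro h
        constructor
        · intro i hi
          have h2 := h i (by omega)
          rw [Nat.div_div_eq_div_mul, ← pow_succ',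
            show (k - 1 - i) + 1 = k + 1 - 1 - i from by omega]
          exact h2
        · have := h k (by omega)
          simpa using this
      · rintro ⟨h1, h2⟩ i hi
        rcases Nat.lt_or_ge i k with hik | hik
        · have h2 := h1 i hik
          rw [Nat.div_div_eq_div_mul, ← pow_succ',
            show (k - 1 - i) + 1 = k + 1 - 1 - i from by omega] at h2
          exact h2
        · have : i = k := by omega
          subst this
          simpa using h2
    rw [hL, ih (z / 10)]
    have b1 : z % 10 < 10 := Nat.mod_lt _ (by norm_num)
    have b2 : c k < 10 := hc k
    omega

lemma sum_digits_lt (c : ℕ → ℕ) (hc : ∀ i, c i < 10) :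
    ∀ k, ∑ i ∈ Finset.range k, c i * 10 ^ (k - 1 - i) < 10 ^ k := by
  intro k
  induction k with
  | zero => simp
  | succ k ih =>
    have h := sum_succ_expand c k
    have hck := hc k
    have : (10:ℕ) ^ (k+1) = 10 * 10 ^ k := by rw [pow_succ']
    calc ∑ i ∈ Finset.range (k+1), c i * 10 ^ (k + 1 - 1 - i)
        = ∑ i ∈ Finset.range (k+1), c i * 10 ^ (k - i) := by simp
      _ = 10 * ∑ i ∈ Finset.range k, c i * 10 ^ (k - 1 - i) + c k := h
      _ < 10 ^ (k+1) := by omega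

/-- Exact count of non-overlapping occurrences of a block `B` of length `k ≥ 1`
within the segment `s_ℓ`, `ℓ ≥ k`: if the first digit `b₁` of `B` is nonzero then
`occ_no(B, s_ℓ) = 10^{ℓ−k} + (ℓ−k)·9·10^{ℓ−k−1}`, and if `b₁ = 0` then
`occ_no(B, s_ℓ) = (ℓ−k)·9·10^{ℓ−k−1}`. -/
theorem occNoSeg_formula (k ℓ : ℕ) (hk : 0 < k) (B : Fin k → Fin 10) (hℓ : k ≤ ℓ) :
    ((B ⟨0, hk⟩ : ℕ) ≠ 0 →
        occNoSeg B ℓ = 10 ^ (ℓ - k) + (ℓ - k) * 9 * 10 ^ (ℓ - k - 1)) ∧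
    ((B ⟨0, hk⟩ : ℕ) = 0 →
        occNoSeg B ℓ = (ℓ - k) * 9 * 10 ^ (ℓ - k - 1)) := by
  classical
  set c : ℕ → ℕ := fun i => if h : i < k then (B ⟨i, h⟩ : ℕ) else 0 with hc_def
  have hc : ∀ i, c i < 10 := by
    intro i
    simp only [hc_def]
    split
    · exact (B _).isLt
    · norm_num
  set m : ℕ := ∑ i ∈ Finset.range k, c i * 10 ^ (k - 1 - i) with hm_def
  have hm : m < 10 ^ k := sum_digits_lt c hc k
  have hc0 : c 0 = (B ⟨0, hk⟩ : ℕ) := by simp only [hc_def]; rw [dif_pos hk]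
  -- value of m / 10^(k-1)
  have hdig : ∀ i < k, m / 10 ^ (k - 1 - i) % 10 = c i :=
    (digit_block_iff c hc k m).2 (Nat.mod_eq_of_lt hm)
  have hdiv0 : m / 10 ^ (k - 1) = c 0 := by
    have h1 := hdig 0 hk
    simp only [Nat.sub_zero] at h1
    have h2 : m / 10 ^ (k - 1) < 10 := by
      rw [Nat.div_lt_iff_lt_mul (by positivity)]
      calc m < 10 ^ k := hm
      _ = 10 * 10 ^ (k-1) := by rw [← pow_succ']; congr 1; omega
    rwa [Nat.mod_eq_of_lt h2] at h1
  -- per-j condition rewrite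
  have hcond : ∀ j y, 1 ≤ j → j ≤ ℓ - k + 1 →
      ((∀ i : Fin k, y / 10 ^ (ℓ - (j + (i : ℕ))) % 10 = (B i : ℕ)) ↔
        y / 10 ^ (ℓ - k + 1 - j) % 10 ^ k = m) := by
    intro j y hj1 hj2
    rw [← digit_block_iff c hc k (y / 10 ^ (ℓ - k + 1 - j))]
    constructor
    · intro h i hi
      have h2 := h ⟨i, hi⟩
      rw [Nat.div_div_eq_div_mul, ← pow_add,
        show (ℓ - k + 1 - j) + (k - 1 - i) = ℓ - (j + i) from by omega]
      simp only [hc_def]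
      rw [dif_pos hi]
      exact h2
    · intro h i
      have h2 := h i i.isLt
      rw [Nat.div_div_eq_div_mul, ← pow_add,
        show (ℓ - k + 1 - j) + (k - 1 - (i : ℕ)) = ℓ - (j + (i : ℕ)) from by omega] at h2
      simp only [hc_def] at h2
      rw [dif_pos i.isLt] at h2
      rw [← h2]
  -- decompose occNoSeg as a sum over j
  have hdecomp : occNoSeg B ℓ = ∑ j ∈ Finset.Icc 1 (ℓ - k + 1),
      ((Finset.Ico (10 ^ (ℓ - 1)) (10 ^ ℓ)).filter fun y =>
        ∀ i : Fin k, y / 10 ^ (ℓ - (j + (i : ℕ))) % 10 = (B i : ℕ)).card := by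
    unfold occNoSeg
    rw [Finset.card_filter, Finset.sum_product, Finset.sum_comm]
    apply Finset.sum_congr rfl
    intro j _
    rw [Finset.card_filter]
  -- value for j ≥ 2
  have hval2 : ∀ j, 2 ≤ j → j ≤ ℓ - k + 1 →
      ((Finset.Ico (10 ^ (ℓ - 1)) (10 ^ ℓ)).filter fun y =>
        ∀ i : Fin k, y / 10 ^ (ℓ - (j + (i : ℕ))) % 10 = (B i : ℕ)).card
      = 9 * 10 ^ (ℓ - k - 1) := by
    intro j hj2 hjle
    rw [Finset.filter_congr (fun y _ => by
      rw [hcond j y (by omega) hjle] : ∀ y ∈ Finset.Ico (10 ^ (ℓ-1)) (10 ^ ℓ), _)]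
    rw [show (10:ℕ) ^ (ℓ - 1) = 10 ^ (j - 2) * (10 ^ (ℓ - k + 1 - j) * 10 ^ k) from by
        rw [← pow_add, ← pow_add]; congr 1; omega,
      show (10:ℕ) ^ ℓ = 10 ^ (j - 1) * (10 ^ (ℓ - k + 1 - j) * 10 ^ k) from by
        rw [← pow_add, ← pow_add]; congr 1; omega]
    rw [count_filter _ _ _ _ m (by positivity) (by positivity) hm]
    have e1 : (10:ℕ) ^ (j - 1) = 10 * 10 ^ (j - 2) := by
      rw [← pow_succ']; congr 1; omega
    rw [e1, show 10 * 10 ^ (j-2) - 10 ^ (j-2) = 9 * 10 ^ (j-2) from by omega,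
      Nat.mul_assoc, ← pow_add,
      show j - 2 + (ℓ - k + 1 - j) = ℓ - k - 1 from by omega]
  -- value for j = 1
  have hval1 : ((Finset.Ico (10 ^ (ℓ - 1)) (10 ^ ℓ)).filter fun y =>
        ∀ i : Fin k, y / 10 ^ (ℓ - (1 + (i : ℕ))) % 10 = (B i : ℕ)).card
      = if c 0 = 0 then 0 else 10 ^ (ℓ - k) := by
    rw [Finset.filter_congr (fun y _ => by
      rw [hcond 1 y le_rfl (by omega)] : ∀ y ∈ Finset.Ico (10 ^ (ℓ-1)) (10 ^ ℓ), _)]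
    have he : ℓ - k + 1 - 1 = ℓ - k := by omega
    rw [he]
    have hD : (0:ℕ) < 10 ^ (ℓ - k) := by positivity
    have hpow : (10:ℕ) ^ k * 10 ^ (ℓ - k) = 10 ^ ℓ := by rw [← pow_add]; congr 1; omega
    have hpow1 : (10:ℕ) ^ (k-1) * 10 ^ (ℓ - k) = 10 ^ (ℓ-1) := by
      rw [← pow_add]; congr 1; omega
    have hiff : ∀ y, y < 10 ^ ℓ →
        (y / 10 ^ (ℓ - k) % 10 ^ k = m ↔
          m * 10 ^ (ℓ - k) ≤ y ∧ y < (m + 1) * 10 ^ (ℓ - k)) := by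
      intro y hy
      have hlt : y / 10 ^ (ℓ - k) < 10 ^ k := by
        rw [Nat.div_lt_iff_lt_mul hD]; rwa [hpow]
      rw [Nat.mod_eq_of_lt hlt]
      constructor
      · intro h
        constructor
        · rw [← h]; exact Nat.div_mul_le_self y _
        · rw [← h]
          exact (Nat.div_lt_iff_lt_mul hD).1 (Nat.lt_succ_self _)
      · rintro ⟨h1, h2⟩
        have ha := (Nat.le_div_iff_mul_le hD).2 h1
        have hb := (Nat.div_lt_iff_lt_mul hD).2 h2
        omega
    by_cases h0 : c 0 = 0
    · -- m < 10^(k-1), so interval is empty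
      have hmlt : m < 10 ^ (k - 1) := by
        by_contra hge
        push_neg at hge
        have : 1 ≤ m / 10 ^ (k - 1) := (Nat.one_le_div_iff (by positivity)).2 hge
        omega
      have : ∀ y ∈ Finset.Ico (10 ^ (ℓ-1)) (10 ^ ℓ),
          ¬ (y / 10 ^ (ℓ - k) % 10 ^ k = m) := by
        intro y hy
        rw [Finset.mem_Ico] at hy
        rw [hiff y hy.2]
        rintro ⟨h1, h2⟩
        have : (m + 1) * 10 ^ (ℓ - k) ≤ 10 ^ (k-1) * 10 ^ (ℓ - k) :=
          Nat.mul_le_mul_right _ (by omega)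
        rw [hpow1] at this
        omega
      rw [if_pos h0, Finset.filter_false_of_mem this, Finset.card_empty]
    · -- m ≥ 10^(k-1)
      have hmge : 10 ^ (k - 1) ≤ m := by
        rw [← hdiv0] at h0
        have : 1 ≤ m / 10 ^ (k - 1) := by omega
        exact (Nat.one_le_div_iff (by positivity)).1 this
      have hlow : 10 ^ (ℓ - 1) ≤ m * 10 ^ (ℓ - k) := by
        calc 10 ^ (ℓ - 1) = 10 ^ (k-1) * 10 ^ (ℓ - k) := hpow1.symm
        _ ≤ m * 10 ^ (ℓ - k) := Nat.mul_le_mul_right _ hmge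
      have hhigh : (m + 1) * 10 ^ (ℓ - k) ≤ 10 ^ ℓ := by
        calc (m + 1) * 10 ^ (ℓ - k) ≤ 10 ^ k * 10 ^ (ℓ - k) :=
          Nat.mul_le_mul_right _ (by omega)
        _ = 10 ^ ℓ := hpow
      have hset : (Finset.Ico (10 ^ (ℓ-1)) (10 ^ ℓ)).filter
          (fun y => y / 10 ^ (ℓ - k) % 10 ^ k = m)
          = Finset.Ico (m * 10 ^ (ℓ - k)) ((m + 1) * 10 ^ (ℓ - k)) := by
        ext y
        simp only [Finset.mem_filter, Finset.mem_Ico]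
        constructor
        · rintro ⟨⟨hy1, hy2⟩, hy3⟩
          exact (hiff y hy2).1 hy3
        · rintro ⟨hy1, hy2⟩
          have hy2' : y < 10 ^ ℓ := by omega
          exact ⟨⟨by omega, hy2'⟩, (hiff y hy2').2 ⟨hy1, hy2⟩⟩
      rw [if_neg h0, hset, Nat.card_Ico]
      have hsm : (m + 1) * 10 ^ (ℓ - k) = m * 10 ^ (ℓ - k) + 10 ^ (ℓ - k) := by
        rw [Nat.add_mul, Nat.one_mul]
      omega
  -- assemble
  have hsplit : Finset.Icc 1 (ℓ - k + 1) = insert 1 (Finset.Icc 2 (ℓ - k + 1)) := by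
    ext x
    simp only [Finset.mem_Icc, Finset.mem_insert]
    omega
  have hmain : occNoSeg B ℓ
      = (if c 0 = 0 then 0 else 10 ^ (ℓ - k)) + (ℓ - k) * 9 * 10 ^ (ℓ - k - 1) := by
    rw [hdecomp, hsplit, Finset.sum_insert (by simp [Finset.mem_Icc]), hval1]
    congr 1
    calc ∑ j ∈ Finset.Icc 2 (ℓ - k + 1),
        ((Finset.Ico (10 ^ (ℓ - 1)) (10 ^ ℓ)).filter fun y =>
          ∀ i : Fin k, y / 10 ^ (ℓ - (j + (i : ℕ))) % 10 = (B i : ℕ)).card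
        = ∑ _j ∈ Finset.Icc 2 (ℓ - k + 1), 9 * 10 ^ (ℓ - k - 1) :=
          Finset.sum_congr rfl (fun j hj =>
            hval2 j (Finset.mem_Icc.1 hj).1 (Finset.mem_Icc.1 hj).2)
      _ = (ℓ - k) * (9 * 10 ^ (ℓ - k - 1)) := by
          rw [Finset.sum_const, Nat.card_Icc, smul_eq_mul,
            show ℓ - k + 1 + 1 - 2 = ℓ - k from by omega]
      _ = (ℓ - k) * 9 * 10 ^ (ℓ - k - 1) := by ring
  constructor
  · intro hB
    rw [hmain, if_neg (by rw [hc0]; exact hB)]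
  · intro hB
    rw [hmain, if_pos (by rw [hc0]; exact hB)]
    omega
end

section
/- There exists a constant C > 0 and a threshold N₀ ∈ ℕ such that for all N ≥ N₀, 10^{n(N)} ≤ C·N/log N, where n(N) is the number of decimal digits of v(N). -/
open scoped Classical

lemma T_mono {a b : ℕ} (h : a ≤ b) : T a ≤ T b :=
  Finset.sum_le_sum_of_subset (Finset.Icc_subset_Icc_right h)

lemma le_T (v : ℕ) : v ≤ T v := by
  calc v = ∑ _j ∈ Finset.Icc 1 v, 1 := by simp
    _ ≤ T v := Finset.sum_le_sum fun j hj => by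
        have hj1 : j ≠ 0 := by
          have := (Finset.mem_Icc.mp hj).1; omega
        have : Nat.digits 10 j ≠ [] := Nat.digits_ne_nil_iff_ne_zero.mpr hj1
        exact List.length_pos_iff.mpr this

lemma T_upper (v : ℕ) : T v ≤ v * (Nat.digits 10 v).length := by
  calc T v ≤ ∑ _j ∈ Finset.Icc 1 v, (Nat.digits 10 v).length :=
        Finset.sum_le_sum fun j hj =>
          Nat.le_digits_len_le 10 j v (Finset.mem_Icc.mp hj).2
    _ = v * (Nat.digits 10 v).length := by simp [mul_comm]

lemma T_lower (m : ℕ) (hm : 1 ≤ m) : 9 * 10 ^ (m - 1) * m ≤ T (10 ^ m - 1) := by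
  have hpow : 10 ^ (m - 1) * 10 = 10 ^ m := by
    rw [← pow_succ]; congr 1; omega
  have hsub : Finset.Icc (10 ^ (m - 1)) (10 ^ m - 1) ⊆ Finset.Icc 1 (10 ^ m - 1) := by
    apply Finset.Icc_subset_Icc_left
    exact Nat.one_le_pow _ _ (by norm_num)
  have hlen : ∀ j ∈ Finset.Icc (10 ^ (m - 1)) (10 ^ m - 1),
      (Nat.digits 10 j).length = m := by
    intro j hj
    rw [Finset.mem_Icc] at hj
    have hp : 0 < 10 ^ (m - 1) := Nat.pow_pos (by norm_num)
    have hj0 : j ≠ 0 := by omega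
    rw [Nat.digits_len 10 j (by norm_num) hj0]
    have hlog : Nat.log 10 j = m - 1 := by
      apply Nat.log_eq_of_pow_le_of_lt_pow hj.1
      have : j < 10 ^ m := by
        have h1 : 1 ≤ 10 ^ m := Nat.one_le_pow _ _ (by norm_num)
        omega
      calc j < 10 ^ m := this
        _ = 10 ^ (m - 1 + 1) := by congr 1; omega
    omega
  calc 9 * 10 ^ (m - 1) * m
      = (Finset.Icc (10 ^ (m - 1)) (10 ^ m - 1)).card * m := by
        rw [Nat.card_Icc]
        have hp : 10 ^ (m - 1) ≤ 10 ^ m := Nat.pow_le_pow_right (by norm_num) (by omega)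
        have hp1 : 1 ≤ 10 ^ (m - 1) := Nat.one_le_pow _ _ (by norm_num)
        have : 10 ^ m - 1 + 1 - 10 ^ (m - 1) = 9 * 10 ^ (m - 1) := by
          have := hpow; omega
        rw [this]
    _ = ∑ j ∈ Finset.Icc (10 ^ (m - 1)) (10 ^ m - 1), (Nat.digits 10 j).length := by
        rw [Finset.sum_congr rfl hlen]; simp [mul_comm]
    _ ≤ T (10 ^ m - 1) := Finset.sum_le_sum_of_subset hsub

/-- There exist `C > 0` and `N₀` such that for all `N ≥ N₀`,
`10^{n(N)} ≤ C·N / log N`, where `n(N)` is the number of decimal digits of `v(N)`. -/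
theorem pow_nOf_le_div_log :
    ∃ C : ℝ, 0 < C ∧ ∃ N₀ : ℕ, ∀ N : ℕ, N₀ ≤ N →
      (10 : ℝ) ^ (nOf N) ≤ C * N / Real.log N := by
  refine ⟨500, by norm_num, 10, fun N hN => ?_⟩
  set v := vOf N with hv
  set n := nOf N with hndef
  -- basic facts about v
  have hne : N ∈ {w | N ≤ T w} := le_T N
  have hmem : N ≤ T v := Nat.sInf_mem (⟨N, hne⟩ : {w | N ≤ T w}.Nonempty)
  have h10v : 10 ≤ v := by
    by_contra h
    push_neg at h
    have h9 : T v ≤ T 9 := T_mono (by omega)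
    have : T 9 ≤ 9 := by
      have := T_upper 9
      have hl : (Nat.digits 10 9).length = 1 := by
        rw [Nat.digits_len 10 9 (by norm_num) (by norm_num)]
        have : Nat.log 10 9 = 0 := Nat.log_eq_zero_iff.mpr (Or.inl (by norm_num))
        omega
      omega
    omega
  have hv0 : v ≠ 0 := by omega
  have hnlen : n = (Nat.digits 10 v).length := rfl
  have hlogv : n = Nat.log 10 v + 1 := by
    rw [hnlen, Nat.digits_len 10 v (by norm_num) hv0]
  have hn2 : 2 ≤ n := by
    have : 1 ≤ Nat.log 10 v := by
      rw [Nat.le_log_iff_pow_le (by norm_num) hv0]; simpa using h10v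
    omega
  have hvlt : v < 10 ^ n := by
    rw [hnlen]; exact Nat.lt_base_pow_length_digits (by norm_num)
  have hvge : 10 ^ (n - 1) ≤ v := by
    have : n - 1 = Nat.log 10 v := by omega
    rw [this]; exact Nat.pow_log_le_self 10 hv0
  have hlt : T (v - 1) < N := by
    have hsinf : v = sInf {w | N ≤ T w} := rfl
    have hnotmem : v - 1 ∉ {w | N ≤ T w} := Nat.notMem_of_lt_sInf (by omega)
    have h2 : ¬ N ≤ T (v - 1) := hnotmem
    omega
  -- lower bound on N
  have hA : 9 * 10 ^ (n - 2) * (n - 1) ≤ N := by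
    have h1 : 9 * 10 ^ (n - 1 - 1) * (n - 1) ≤ T (10 ^ (n - 1) - 1) :=
      T_lower (n - 1) (by omega)
    have h2 : T (10 ^ (n - 1) - 1) ≤ T (v - 1) := T_mono (by omega)
    rw [show n - 1 - 1 = n - 2 from by omega] at h1
    omega
  -- upper bound on N
  have hB : N ≤ 10 ^ n * n := by
    have := T_upper v
    rw [← hnlen] at this
    have h2 : v * n ≤ 10 ^ n * n := Nat.mul_le_mul_right _ (by omega)
    omega
  -- key nat inequality : n * 10^n ≤ 25 * N
  have hkey : n * 10 ^ n ≤ 25 * N := by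
    obtain ⟨m, hm⟩ : ∃ m, n = m + 2 := ⟨n - 2, by omega⟩
    rw [hm] at hA ⊢
    have hA' : 9 * 10 ^ m * (m + 1) ≤ N := by simpa using hA
    have hp : 0 < 10 ^ m := Nat.pow_pos (by norm_num)
    have hpow : 10 ^ (m + 2) = 100 * 10 ^ m := by ring
    rw [hpow]
    nlinarith
  -- move to reals
  have hN1 : (1 : ℝ) < N := by exact_mod_cast (by omega : (1 : ℕ) < N)
  have hlogpos : 0 < Real.log N := Real.log_pos hN1
  rw [div_eq_mul_inv, ← div_eq_mul_inv, le_div_iff₀ hlogpos]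
  -- log N ≤ 20 n
  have hlogN : Real.log N ≤ 20 * n := by
    have hNle : (N : ℝ) ≤ 10 ^ (2 * n) := by
      have h1 : N ≤ 10 ^ n * 10 ^ n := by
        have hn10 : n ≤ 10 ^ n := (Nat.lt_pow_self (n := n) (by norm_num : 1 < 10)).le
        calc N ≤ 10 ^ n * n := hB
          _ ≤ 10 ^ n * 10 ^ n := Nat.mul_le_mul_left _ hn10
      have : (N : ℝ) ≤ (10 : ℝ) ^ n * 10 ^ n := by exact_mod_cast h1
      calc (N : ℝ) ≤ (10 : ℝ) ^ n * 10 ^ n := this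
        _ = 10 ^ (2 * n) := by rw [two_mul, pow_add]
    calc Real.log N ≤ Real.log (10 ^ (2 * n)) :=
          Real.log_le_log (by positivity) hNle
      _ = (2 * n : ℕ) * Real.log 10 := by rw [Real.log_pow]
      _ ≤ (2 * n : ℕ) * 10 := by
          have h10 : Real.log 10 ≤ 10 := by
            have := Real.log_le_sub_one_of_pos (x := 10) (by norm_num)
            linarith
          have : (0 : ℝ) ≤ (2 * n : ℕ) := by positivity
          nlinarith
      _ = 20 * n := by push_cast; ring
  have hkeyR : (n : ℝ) * 10 ^ n ≤ 25 * N := by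
    have := hkey
    calc (n : ℝ) * 10 ^ n = ((n * 10 ^ n : ℕ) : ℝ) := by push_cast; ring
      _ ≤ ((25 * N : ℕ) : ℝ) := by exact_mod_cast this
      _ = 25 * N := by push_cast; ring
  have hp : (0 : ℝ) < 10 ^ n := by positivity
  have hn0 : (0 : ℝ) ≤ (n : ℝ) := by positivity
  calc (10 : ℝ) ^ n * Real.log N ≤ 10 ^ n * (20 * n) := by nlinarith
    _ = 20 * ((n : ℝ) * 10 ^ n) := by ring
    _ ≤ 20 * (25 * N) := by linarith
    _ = 500 * N := by ring
end
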